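/- arXiv:2211.05670 — 4 statements merged into one kernel-verified Lean document; each statement's English description precedes it below -/
import Mathlib

section
/- Let d ≥ 1, c ≥ 1, γ > 0, and let λ : ℤ^d → ℝ satisfy λ_{n+k} ≠ λ_n for all n ∈ ℤ^d and k ≠ 0 together with conditions (A1)–(A3). Let v : ℤ^d → ℂ satisfy ‖v‖_T ≤ 1/(4c), and set λ̃_n := λ_n + v_n. Then for every k ∈ ℤ^d with k ≠ 0 one has λ̃_{n+k} ≠ λ̃_n for all n, and sup_{n ∈ ℤ^d} 1/|λ̃_{n+k} − λ̃_n| + sup_{n ∈ ℤ^d, j ≠ 0} (1/|λ_j − λ_0|) · |1/(λ̃_{n+j+k} − λ̃_{n+j}) − 1/(λ̃_{n+k} − λ̃_n)| ≤ 12 c² |k|^{2γ}. -/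
open scoped ENNReal

noncomputable section

abbrev Zd (d : ℕ) := Fin d → ℤ

/-- `|k| = |k₁| + ⋯ + |k_d|` as a real number. -/
def absZ {d : ℕ} (k : Zd d) : ℝ := ∑ i, |(k i : ℝ)|

/-- The T-norm of a sequence `a : ℤ^d → ℂ` relative to the base sequence `lam`:
`‖a‖_T = sup_n |a_n| + sup_{n, j ≠ 0} |a_{n+j} - a_n| / |λ_j - λ_0|`. -/
def Tnorm {d : ℕ} (lam : Zd d → ℝ) (a : Zd d → ℂ) : ℝ≥0∞ :=
  (⨆ n : Zd d, ENNReal.ofReal ‖a n‖) +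
    ⨆ n : Zd d, ⨆ j : {j : Zd d // j ≠ 0},
      ENNReal.ofReal (‖a (n + j.1) - a n‖ / |lam j.1 - lam 0|)

lemma cabs_sub_le' (x y : ℂ) : ‖x - y‖ ≤ ‖x‖ + ‖y‖ := by
  exact norm_sub_le x y

set_option maxHeartbeats 2000000 in
theorem stability_of_small_denominators
    (d : ℕ) (hd : 1 ≤ d) (c γ : ℝ) (hc : 1 ≤ c) (hγ : 0 < γ)
    (lam : Zd d → ℝ)
    (hne : ∀ (n k : Zd d), k ≠ 0 → lam (n + k) ≠ lam n)
    (hA1 : ∀ (n k : Zd d), k ≠ 0 → 1 / |lam (n + k) - lam n| ≤ c * absZ k ^ γ)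
    (hA2 : ∀ (n k : Zd d), k ≠ 0 →
      1 / |lam (n + k) - lam n| ≤ c * (1 + 1 / |lam k - lam 0|))
    (hA3 : ∀ (n j k : Zd d), j ≠ 0 → k ≠ 0 →
      |(1 / (lam j - lam 0)) *
        (1 / (lam (n + j + k) - lam (n + j)) - 1 / (lam (n + k) - lam n))| ≤
        c * (1 + 1 / |lam k - lam 0|))
    (v : Zd d → ℂ)
    (hv : Tnorm lam v ≤ ENNReal.ofReal (1 / (4 * c))) :
    ∀ k : Zd d, k ≠ 0 →
      (∀ n : Zd d, (lam (n + k) : ℂ) + v (n + k) ≠ (lam n : ℂ) + v n) ∧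
      Tnorm lam
          (fun n => (((lam (n + k) : ℂ) + v (n + k)) - ((lam n : ℂ) + v n))⁻¹) ≤
        ENNReal.ofReal (12 * c ^ 2 * absZ k ^ (2 * γ)) := by
  intro k hk
  have hc0 : (0:ℝ) < c := lt_of_lt_of_le one_pos hc
  have h4c : (0:ℝ) < 4 * c := by linarith
  have h2c : (0:ℝ) < 2 * c := by linarith
  -- `a = |k|^γ ≥ 1`
  have habs1 : (1:ℝ) ≤ absZ k := by
    obtain ⟨i, hi⟩ := Function.ne_iff.mp hk
    have h2 : (1:ℤ) ≤ |k i| := by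
      simp only [Pi.zero_apply] at hi
      exact Int.one_le_abs hi
    have h1 : (1:ℝ) ≤ |(k i : ℝ)| := by
      calc (1:ℝ) = ((1:ℤ):ℝ) := by norm_num
        _ ≤ ((|k i|:ℤ):ℝ) := by exact_mod_cast h2
        _ = |(k i : ℝ)| := by push_cast; ring
    refine le_trans h1 ?_
    exact Finset.single_le_sum (f := fun i => |(k i : ℝ)|) (fun i _ => abs_nonneg _)
      (Finset.mem_univ i)
  have habs0 : (0:ℝ) < absZ k := by linarith
  set a : ℝ := absZ k ^ γ with ha_def
  have ha1 : (1:ℝ) ≤ a := by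
    rw [ha_def, ← Real.one_rpow γ]
    exact Real.rpow_le_rpow zero_le_one habs1 hγ.le
  have ha0 : (0:ℝ) < a := lt_of_lt_of_le one_pos ha1
  have hca : (0:ℝ) < c * a := mul_pos hc0 ha0
  have h2ca : (0:ℝ) < 2 * (c * a) := by linarith
  -- positivity of denominators of the base sequence
  have hLpos : ∀ j : Zd d, j ≠ 0 → 0 < |lam j - lam 0| := by
    intro j hj
    have := hne 0 j hj
    rw [zero_add] at this
    exact abs_pos.mpr (sub_ne_zero.mpr this)
  have hSpos : ∀ n : Zd d, 0 < |lam (n + k) - lam n| :=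
    fun n => abs_pos.mpr (sub_ne_zero.mpr (hne n k hk))
  have hSne : ∀ n : Zd d, lam (n + k) - lam n ≠ 0 :=
    fun n => sub_ne_zero.mpr (hne n k hk)
  have hL0 : 0 < |lam k - lam 0| := hLpos k hk
  have hLa : 1 / |lam k - lam 0| ≤ c * a := by
    have h := hA1 0 k hk
    rw [zero_add] at h
    rw [ha_def]
    exact h
  -- extraction from the T-norm hypothesis
  have hkey : ∀ (n m j : Zd d), j ≠ 0 →
      ‖v n‖ + ‖v (m + j) - v m‖ / |lam j - lam 0| ≤ 1 / (4 * c) := by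
    intro n m j hj
    have h1 : ENNReal.ofReal (‖v n‖) ≤
        ⨆ n : Zd d, ENNReal.ofReal (‖v n‖) :=
      le_iSup (fun n : Zd d => ENNReal.ofReal (‖v n‖)) n
    have h2 : ENNReal.ofReal (‖v (m + j) - v m‖ / |lam j - lam 0|) ≤
        ⨆ n : Zd d, ⨆ j : {j : Zd d // j ≠ 0},
          ENNReal.ofReal (‖v (n + j.1) - v n‖ / |lam j.1 - lam 0|) :=
      le_iSup_of_le m (le_iSup_of_le ⟨j, hj⟩ le_rfl)
    have h3 := le_trans (add_le_add h1 h2) hv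
    rw [← ENNReal.ofReal_add (norm_nonneg _)
      (div_nonneg (norm_nonneg _) (abs_nonneg _))] at h3
    exact (ENNReal.ofReal_le_ofReal_iff (by positivity)).mp h3
  have hβ : ∀ (m j : Zd d), j ≠ 0 →
      ‖v (m + j) - v m‖ ≤ |lam j - lam 0| / (4 * c) := by
    intro m j hj
    have h := hkey m m j hj
    have h0 : ‖v (m + j) - v m‖ / |lam j - lam 0| ≤ 1 / (4 * c) := by
      have := norm_nonneg (v m); linarith
    rw [div_le_div_iff₀ (hLpos j hj) h4c] at h0
    rw [le_div_iff₀ h4c]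
    linarith
  -- the perturbed denominators
  set D : Zd d → ℂ := fun n => ((lam (n + k) : ℂ) + v (n + k)) - ((lam n : ℂ) + v n) with hD_def
  -- key: the perturbation is at most half the denominator
  have hvdiff : ∀ n : Zd d, ‖v (n + k) - v n‖ ≤ |lam (n + k) - lam n| / 2 := by
    intro n
    have h1 := hkey n n k hk
    have h2 := hkey (n + k) n k hk
    have hS2 : 1 / |lam (n + k) - lam n| ≤ c * (1 + 1 / |lam k - lam 0|) := hA2 n k hk
    set L := |lam k - lam 0| with hL_def
    set S := |lam (n + k) - lam n| with hS_def
    set V := ‖v (n + k) - v n‖ with hV_def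
    have hSp : 0 < S := hSpos n
    have htri : V ≤ ‖v (n + k)‖ + ‖v n‖ := by
      rw [hV_def]; exact cabs_sub_le' _ _
    by_contra hcon
    push_neg at hcon
    -- hcon : S / 2 < V
    have hq0 : 0 ≤ V / L := div_nonneg (norm_nonneg _) hL0.le
    have hVq : (V / L) * L = V := div_mul_cancel₀ V hL0.ne'
    -- from A2 : L ≤ S * c * (L + 1)
    have hSL : L ≤ S * (c * (L + 1)) := by
      have h1S : 1 ≤ (c * (1 + 1 / L)) * S := (div_le_iff₀ hSp).mp hS2
      have h2' : L * 1 ≤ L * ((c * (1 + 1 / L)) * S) := mul_le_mul_of_nonneg_left h1S hL0.le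
      calc L = L * 1 := (mul_one L).symm
        _ ≤ L * ((c * (1 + 1 / L)) * S) := h2'
        _ = S * (c * (L + L * (1 / L))) := by ring
        _ = S * (c * (L + 1)) := by rw [mul_one_div, div_self hL0.ne']
    have hclp : (0:ℝ) < c * (L + 1) := mul_pos hc0 (by linarith)
    have hVL : L < 2 * V * (c * (L + 1)) := by
      have h' : S * (c * (L + 1)) < (2 * V) * (c * (L + 1)) :=
        mul_lt_mul_of_pos_right (by linarith) hclp
      calc L ≤ S * (c * (L + 1)) := hSL
        _ < 2 * V * (c * (L + 1)) := h'
    have hq1 : 1 < 2 * (V / L) * (c * (L + 1)) := by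
      nlinarith [hVL, hVq, hL0]
    -- from the T-norm bound
    have h14 : (1:ℝ) / (4 * c) + 1 / (4 * c) = 1 / (2 * c) := by
      field_simp
      ring
    have hs : (V / L) * L + 2 * (V / L) ≤ 1 / (2 * c) := by
      rw [hVq]
      linarith [h1, h2, htri]
    have hmul : (2 * c) * ((V / L) * L + 2 * (V / L)) ≤ (2 * c) * (1 / (2 * c)) :=
      mul_le_mul_of_nonneg_left hs (by linarith)
    have h2c1 : (2 * c) * (1 / (2 * c)) = 1 := by field_simp
    nlinarith [hmul, hq1, hq0, hc0, hL0]
  -- lower bound on |D n|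
  have habsD : ∀ n : Zd d, |lam (n + k) - lam n| / 2 ≤ ‖D n‖ := by
    intro n
    have hDeq : ((lam (n + k) - lam n : ℝ) : ℂ) = D n + (v n - v (n + k)) := by
      rw [hD_def]; push_cast; ring
    have h1 : ‖((lam (n + k) - lam n : ℝ) : ℂ)‖ ≤
        ‖D n‖ + ‖v n - v (n + k)‖ := by
      rw [hDeq]
      exact norm_add_le _ _
    have h2 : ‖v n - v (n + k)‖ = ‖v (n + k) - v n‖ := by
      rw [show v n - v (n + k) = -(v (n + k) - v n) from by ring, norm_neg]
    rw [Complex.norm_real, Real.norm_eq_abs, h2] at h1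
    have h3 := hvdiff n
    linarith [h1, h3]
  have hDne : ∀ n : Zd d, D n ≠ 0 := by
    intro n h0
    have h := habsD n
    rw [h0, norm_zero] at h
    linarith [hSpos n]
  have hDpos : ∀ n : Zd d, 0 < ‖D n‖ := fun n => norm_pos_iff.mpr (hDne n)
  have hSlow : ∀ n : Zd d, 1 / (c * a) ≤ |lam (n + k) - lam n| := by
    intro n
    have h := hA1 n k hk
    rw [← ha_def] at h
    rw [div_le_iff₀ hca]
    rw [div_le_iff₀ (hSpos n)] at h
    nlinarith [h]
  have hDlow : ∀ n : Zd d, 1 / (2 * (c * a)) ≤ ‖D n‖ := by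
    intro n
    have h1 := hSlow n
    have h2 := habsD n
    rw [div_le_iff₀ hca] at h1
    rw [div_le_iff₀ h2ca]
    nlinarith [h1, h2]
  have hDinv : ∀ n : Zd d, (‖D n‖)⁻¹ ≤ 2 * (c * a) := by
    intro n
    have h := hDlow n
    rw [div_le_iff₀ h2ca] at h
    rw [inv_eq_one_div, div_le_iff₀ (hDpos n)]
    linarith
  constructor
  · intro n hEq
    apply hDne n
    rw [hD_def]
    simp only [sub_eq_zero]
    exact hEq
  · -- bound the T-norm of 1/D
    have hfun : (fun n => (((lam (n + k) : ℂ) + v (n + k)) - ((lam n : ℂ) + v n))⁻¹) =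
        fun n => (D n)⁻¹ := by
      funext m; rw [hD_def]
    have hfirst : (⨆ n : Zd d, ENNReal.ofReal (‖(D n)⁻¹‖)) ≤
        ENNReal.ofReal (2 * (c * a)) := by
      refine iSup_le fun n => ENNReal.ofReal_le_ofReal ?_
      rw [norm_inv]
      exact hDinv n
    have hsecond : (⨆ n : Zd d, ⨆ j : {j : Zd d // j ≠ 0},
        ENNReal.ofReal (‖(D (n + j.1))⁻¹ - (D n)⁻¹‖ / |lam j.1 - lam 0|)) ≤
        ENNReal.ofReal (4 * c * (1 + c * a) + 2 * c * a ^ 2) := by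
      refine iSup_le fun n => iSup_le fun j => ENNReal.ofReal_le_ofReal ?_
      obtain ⟨j, hj⟩ := j
      simp only
      -- instantiate everything needed
      have hLjp : 0 < |lam j - lam 0| := hLpos j hj
      have hA3' := hA3 n j k hj hk
      have hw1 := hβ n j hj
      have hw2 := hβ (n + k) j hj
      have hb1 := habsD n
      have hb2 := habsD (n + j)
      have hd1 := hDlow n
      have hd2 := hDlow (n + j)
      have hDn := hDne n
      have hDn' := hDne (n + j)
      have hne1 : lam (n + k) - lam n ≠ 0 := hSne n
      have hne2 : lam (n + j + k) - lam (n + j) ≠ 0 := hSne (n + j)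
      have hSp : 0 < |lam (n + k) - lam n| := hSpos n
      have hS'p : 0 < |lam (n + j + k) - lam (n + j)| := hSpos (n + j)
      set Lj := |lam j - lam 0| with hLj_def
      set S := |lam (n + k) - lam n| with hS_def
      set S' := |lam (n + j + k) - lam (n + j)| with hS'_def
      set X : ℝ := (lam (n + k) - lam n) - (lam (n + j + k) - lam (n + j)) with hX_def
      set W : ℂ := (v (n + k) - v n) - (v (n + j + k) - v (n + j)) with hW_def
      -- algebraic identity for the difference of inverses
      have he1 : (D (n + j))⁻¹ - (D n)⁻¹ = (D n - D (n + j)) / (D (n + j) * D n) := by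
        field_simp
      have he3 : D n - D (n + j) = (X : ℂ) + W := by
        rw [hD_def, hX_def, hW_def]; push_cast; ring
      have he4 : ‖D n - D (n + j)‖ ≤ |X| + ‖W‖ := by
        rw [he3]
        calc ‖(X:ℂ) + W‖ ≤ ‖(X:ℂ)‖ + ‖W‖ :=
            norm_add_le _ _
          _ = |X| + ‖W‖ := by rw [Complex.norm_real, Real.norm_eq_abs]
      -- bound on W
      have hWb0 : ‖W‖ ≤ Lj / (2 * c) := by
        have hWeq : W = (v (n + j) - v n) - (v ((n + k) + j) - v (n + k)) := by
          rw [hW_def, show n + j + k = (n + k) + j from by ring]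
          ring
        have htr : ‖W‖ ≤ ‖v (n + j) - v n‖ +
            ‖v ((n + k) + j) - v (n + k)‖ := by
          rw [hWeq]; exact cabs_sub_le' _ _
        have hsum : Lj / (4 * c) + Lj / (4 * c) = Lj / (2 * c) := by
          field_simp
          ring
        linarith [htr, hw1, hw2]
      -- bound on X via (A3)
      have hXeq : 1 / (lam (n + j + k) - lam (n + j)) - 1 / (lam (n + k) - lam n) =
          X / ((lam (n + j + k) - lam (n + j)) * (lam (n + k) - lam n)) := by
        rw [hX_def]; field_simp
      rw [hXeq, abs_mul, abs_one_div, abs_div, abs_mul] at hA3'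
      rw [← hLj_def, ← hS'_def, ← hS_def] at hA3'
      -- hA3' : 1/Lj * (|X| / (S' * S)) ≤ c * (1 + 1/|lam k - lam 0|)
      have hM : c * (1 + 1 / |lam k - lam 0|) ≤ c * (1 + c * a) := by
        have := mul_le_mul_of_nonneg_left hLa hc0.le
        nlinarith [this]
      have hXb1 : |X| ≤ Lj * (c * (1 + c * a)) * (S' * S) := by
        have h := le_trans hA3' hM
        rw [div_mul_div_comm, one_mul] at h
        rw [div_le_iff₀ (by positivity : (0:ℝ) < Lj * (S' * S))] at h
        calc |X| ≤ c * (1 + c * a) * (Lj * (S' * S)) := h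
          _ = Lj * (c * (1 + c * a)) * (S' * S) := by ring
      have hcca : (0:ℝ) ≤ c * (1 + c * a) := by nlinarith [hc0, hca]
      have hXb : |X| ≤ Lj * (4 * c * (1 + c * a)) *
          (‖D (n + j)‖ * ‖D n‖) := by
        have hprod_le : S' * S ≤ (2 * ‖D (n + j)‖) * (2 * ‖D n‖) :=
          mul_le_mul (by linarith) (by linarith) hSp.le
            (by linarith [hDpos (n + j)])
        calc |X| ≤ Lj * (c * (1 + c * a)) * (S' * S) := hXb1
          _ ≤ Lj * (c * (1 + c * a)) *
              ((2 * ‖D (n + j)‖) * (2 * ‖D n‖)) :=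
            mul_le_mul_of_nonneg_left hprod_le (mul_nonneg hLjp.le hcca)
          _ = Lj * (4 * c * (1 + c * a)) * (‖D (n + j)‖ * ‖D n‖) := by
            ring
      have hWb : ‖W‖ ≤ Lj * (2 * c * a ^ 2) *
          (‖D (n + j)‖ * ‖D n‖) := by
        have hmul2 : (1 / (2 * (c * a))) * (1 / (2 * (c * a))) ≤
            ‖D (n + j)‖ * ‖D n‖ :=
          mul_le_mul hd2 hd1 (by positivity) (norm_nonneg _)
        have hid : Lj * (2 * c * a ^ 2) * ((1 / (2 * (c * a))) * (1 / (2 * (c * a)))) =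
            Lj / (2 * c) := by
          field_simp
        have hnn : (0:ℝ) ≤ Lj * (2 * c * a ^ 2) := by
          apply mul_nonneg hLjp.le
          nlinarith [hc0, ha0]
        calc ‖W‖ ≤ Lj / (2 * c) := hWb0
          _ = Lj * (2 * c * a ^ 2) * ((1 / (2 * (c * a))) * (1 / (2 * (c * a)))) := hid.symm
          _ ≤ Lj * (2 * c * a ^ 2) * (‖D (n + j)‖ * ‖D n‖) :=
            mul_le_mul_of_nonneg_left hmul2 hnn
      -- combine
      have hprodD : 0 < ‖D (n + j)‖ * ‖D n‖ :=
        mul_pos (hDpos (n + j)) (hDpos n)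
      have hmain : ‖(D (n + j))⁻¹ - (D n)⁻¹‖ ≤
          Lj * (4 * c * (1 + c * a) + 2 * c * a ^ 2) := by
        rw [he1, norm_div, norm_mul]
        rw [div_le_iff₀ hprodD]
        calc ‖D n - D (n + j)‖ ≤ |X| + ‖W‖ := he4
          _ ≤ Lj * (4 * c * (1 + c * a)) * (‖D (n + j)‖ * ‖D n‖) +
              Lj * (2 * c * a ^ 2) * (‖D (n + j)‖ * ‖D n‖) :=
            add_le_add hXb hWb
          _ = Lj * (4 * c * (1 + c * a) + 2 * c * a ^ 2) *
              (‖D (n + j)‖ * ‖D n‖) := by ring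
      rw [div_le_iff₀ hLjp]
      calc ‖(D (n + j))⁻¹ - (D n)⁻¹‖ ≤
          Lj * (4 * c * (1 + c * a) + 2 * c * a ^ 2) := hmain
        _ = (4 * c * (1 + c * a) + 2 * c * a ^ 2) * Lj := by ring
    rw [hfun, Tnorm]
    refine le_trans (add_le_add hfirst hsecond) ?_
    rw [← ENNReal.ofReal_add (by linarith [h2ca]) (by nlinarith [hc0, ha0, hca])]
    refine ENNReal.ofReal_le_ofReal ?_
    have hrw : absZ k ^ (2 * γ) = a * a := by
      rw [ha_def, two_mul, Real.rpow_add habs0]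
    rw [hrw]
    nlinarith [hc, ha1, hc0, ha0, mul_le_mul hc ha1 zero_le_one hc0.le,
      sq_nonneg (c * a - 1), sq_nonneg (c - 1), sq_nonneg (a - 1),
      mul_pos hca hca]
end
end

section
/- Let d ≥ 1, c ≥ 1, γ > 0, and let λ : ℤ^d → ℝ satisfy λ_{n+k} ≠ λ_n for all n ∈ ℤ^d, k ≠ 0, together with conditions (A1)–(A3). Let ℓ ∈ ℕ, let α_0 ≥ α_1 ≥ … ≥ α_ℓ > 0, let V^{(0)},…,V^{(ℓ)} : ℤ^d × ℤ^d → ℂ be matrices with ‖V^{(j)}‖_{α_j} < ∞ for j = 0,…,ℓ, let ε ∈ ℝ and ε_j := ε^{2^j}. If Σ_{j=0}^{ℓ} |ε_j| · ‖V^{(j)}‖_{α_j} ≤ 1/(4c), then the perturbed eigenvalues λ^{(ℓ+1)}_n := λ_n + Σ_{j=0}^{ℓ} ε_j V^{(j)}_{n,n} are pairwise distinct, and for every k ≠ 0: sup_{n ∈ ℤ^d} 1/|λ^{(ℓ+1)}_{n+k} − λ^{(ℓ+1)}_n| ≤ 12 c² |k|^{2γ}. -/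
open scoped ENNReal

noncomputable section

set_option maxHeartbeats 1000000

/-- The α-norm of a matrix `A : ℤ^d × ℤ^d → ℂ`:
`‖A‖_α = sup_k e^{α|k|} ‖A_k‖_T`, where `A_k = (A_{n,n+k})_n`. -/
def matNorm {d : ℕ} (lam : Zd d → ℝ) (α : ℝ) (A : Zd d → Zd d → ℂ) : ℝ≥0∞ :=
  ⨆ k : Zd d, ENNReal.ofReal (Real.exp (α * absZ k)) * Tnorm lam (fun n => A n (n + k))

theorem diophantine_stability_along_KAM
    (d : ℕ) (hd : 1 ≤ d) (c γ : ℝ) (hc : 1 ≤ c) (hγ : 0 < γ)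
    (lam : Zd d → ℝ)
    (hne : ∀ (n k : Zd d), k ≠ 0 → lam (n + k) ≠ lam n)
    (hA1 : ∀ (n k : Zd d), k ≠ 0 → 1 / |lam (n + k) - lam n| ≤ c * absZ k ^ γ)
    (hA2 : ∀ (n k : Zd d), k ≠ 0 →
      1 / |lam (n + k) - lam n| ≤ c * (1 + 1 / |lam k - lam 0|))
    (hA3 : ∀ (n j k : Zd d), j ≠ 0 → k ≠ 0 →
      |(1 / (lam j - lam 0)) *
        (1 / (lam (n + j + k) - lam (n + j)) - 1 / (lam (n + k) - lam n))| ≤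
        c * (1 + 1 / |lam k - lam 0|))
    (ℓ : ℕ) (α : ℕ → ℝ)
    (hαpos : 0 < α ℓ)
    (hαmono : ∀ i j : ℕ, i ≤ j → j ≤ ℓ → α j ≤ α i)
    (V : ℕ → Zd d → Zd d → ℂ)
    (hV : ∀ j ≤ ℓ, matNorm lam (α j) (V j) ≠ ⊤)
    (ε : ℝ)
    (hsum : ∑ j ∈ Finset.range (ℓ + 1),
        ENNReal.ofReal |ε ^ 2 ^ j| * matNorm lam (α j) (V j) ≤
        ENNReal.ofReal (1 / (4 * c))) :
    (∀ n m : Zd d, n ≠ m →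
      (lam n : ℂ) + ∑ j ∈ Finset.range (ℓ + 1), ((ε ^ 2 ^ j : ℝ) : ℂ) * V j n n ≠
      (lam m : ℂ) + ∑ j ∈ Finset.range (ℓ + 1), ((ε ^ 2 ^ j : ℝ) : ℂ) * V j m m) ∧
    ∀ k : Zd d, k ≠ 0 → ∀ n : Zd d,
      1 / ‖
          (((lam (n + k) : ℂ) + ∑ j ∈ Finset.range (ℓ + 1),
              ((ε ^ 2 ^ j : ℝ) : ℂ) * V j (n + k) (n + k)) -
            ((lam n : ℂ) + ∑ j ∈ Finset.range (ℓ + 1),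
              ((ε ^ 2 ^ j : ℝ) : ℂ) * V j n n))‖ ≤
        12 * c ^ 2 * absZ k ^ (2 * γ) := by

  classical
  have hc0 : (0:ℝ) < c := lt_of_lt_of_le one_pos hc
  -- |k| ≥ 1 for k ≠ 0
  have habs1 : ∀ k : Zd d, k ≠ 0 → (1:ℝ) ≤ absZ k := by
    intro k hk
    obtain ⟨i, hi⟩ := Function.ne_iff.mp hk
    have hki : k i ≠ 0 := by simpa using hi
    have h1 : (1:ℝ) ≤ |(k i : ℝ)| := by
      have h2 : (1:ℤ) ≤ |k i| := Int.one_le_abs hki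
      calc (1:ℝ) = ((1:ℤ):ℝ) := by norm_num
        _ ≤ ((|k i| : ℤ) : ℝ) := by exact_mod_cast h2
        _ = |(k i : ℝ)| := by push_cast; ring
    calc (1:ℝ) ≤ |(k i : ℝ)| := h1
      _ ≤ absZ k := Finset.single_le_sum (f := fun j => |(k j : ℝ)|)
        (fun j _ => abs_nonneg _) (Finset.mem_univ i)
  -- t > 0
  have htpos : ∀ k : Zd d, k ≠ 0 → (0:ℝ) < |lam k - lam 0| := by
    intro k hk
    have := hne 0 k hk
    rw [zero_add] at this
    exact abs_pos.mpr (sub_ne_zero.mpr this)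
  -- diagonal T-norm is bounded by matNorm
  have hTd : ∀ j : ℕ, Tnorm lam (fun m => V j m m) ≤ matNorm lam (α j) (V j) := by
    intro j
    have heq : Tnorm lam (fun m => V j m m) =
        ENNReal.ofReal (Real.exp (α j * absZ (0 : Zd d))) *
          Tnorm lam (fun m => V j m (m + 0)) := by
      simp [absZ]
    rw [heq]
    exact le_iSup (fun k => ENNReal.ofReal (Real.exp (α j * absZ k)) *
      Tnorm lam (fun m => V j m (m + k))) 0
  -- diagonal difference bound
  have hΔ : ∀ (j : ℕ) (n k : Zd d), k ≠ 0 →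
      ENNReal.ofReal (‖V j (n+k) (n+k) - V j n n‖) ≤
        ENNReal.ofReal (min 2 |lam k - lam 0|) * Tnorm lam (fun m => V j m m) := by
    intro j n k hk
    set a : Zd d → ℂ := fun m => V j m m with ha
    have ht0 : 0 < |lam k - lam 0| := htpos k hk
    have hT : Tnorm lam a =
        (⨆ m : Zd d, ENNReal.ofReal (‖a m‖)) +
          ⨆ m : Zd d, ⨆ i : {i : Zd d // i ≠ 0},
            ENNReal.ofReal (‖a (m + i.1) - a m‖ / |lam i.1 - lam 0|) := rfl
    have hsup1 : ∀ m : Zd d, ENNReal.ofReal (‖a m‖) ≤ Tnorm lam a := by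
      intro m
      rw [hT]
      exact le_trans (le_iSup (fun m => ENNReal.ofReal (‖a m‖)) m) le_self_add
    have hsup2 : ENNReal.ofReal (‖a (n+k) - a n‖ / |lam k - lam 0|) ≤
        Tnorm lam a := by
      rw [hT]
      refine le_trans ?_ le_add_self
      exact le_iSup_of_le n (le_iSup_of_le ⟨k, hk⟩ le_rfl)
    rcases le_total 2 |lam k - lam 0| with h2t | h2t
    · rw [min_eq_left h2t]
      calc ENNReal.ofReal (‖a (n+k) - a n‖)
          ≤ ENNReal.ofReal (‖a (n+k)‖ + ‖a n‖) :=
            ENNReal.ofReal_le_ofReal (by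
              simpa using norm_sub_le (a (n+k)) (a n))
        _ = ENNReal.ofReal (‖a (n+k)‖) + ENNReal.ofReal (‖a n‖) :=
            ENNReal.ofReal_add (by positivity) (by positivity)
        _ ≤ Tnorm lam a + Tnorm lam a := add_le_add (hsup1 _) (hsup1 _)
        _ = ENNReal.ofReal 2 * Tnorm lam a := by
            have : ENNReal.ofReal (2:ℝ) = (2:ℝ≥0∞) := by norm_num
            rw [this, two_mul]
    · rw [min_eq_right h2t]
      have hrw : ‖a (n+k) - a n‖ =
          |lam k - lam 0| * (‖a (n+k) - a n‖ / |lam k - lam 0|) := by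
        field_simp
      calc ENNReal.ofReal (‖a (n+k) - a n‖)
          = ENNReal.ofReal |lam k - lam 0| *
              ENNReal.ofReal (‖a (n+k) - a n‖ / |lam k - lam 0|) := by
            rw [← ENNReal.ofReal_mul ht0.le, ← hrw]
        _ ≤ ENNReal.ofReal |lam k - lam 0| * Tnorm lam a := mul_le_mul_right hsup2 _
  -- perturbation bound
  have hP : ∀ (n k : Zd d), k ≠ 0 →
      ‖∑ j ∈ Finset.range (ℓ+1),
          ((ε ^ 2 ^ j : ℝ) : ℂ) * (V j (n+k) (n+k) - V j n n)‖ ≤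
        min 2 |lam k - lam 0| / (4 * c) := by
    intro n k hk
    have ht0 : 0 < |lam k - lam 0| := htpos k hk
    have hminnn : (0:ℝ) ≤ min 2 |lam k - lam 0| := le_min (by norm_num) ht0.le
    have hstep : ‖∑ j ∈ Finset.range (ℓ+1),
          ((ε ^ 2 ^ j : ℝ) : ℂ) * (V j (n+k) (n+k) - V j n n)‖ ≤
        ∑ j ∈ Finset.range (ℓ+1), |ε ^ 2 ^ j| * ‖V j (n+k) (n+k) - V j n n‖ := by
      refine le_trans (norm_sum_le _ _) ?_
      refine le_of_eq (Finset.sum_congr rfl fun j _ => ?_)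
      rw [norm_mul, Complex.norm_real, Real.norm_eq_abs]
    refine hstep.trans ?_
    have hR : (0:ℝ) ≤ min 2 |lam k - lam 0| / (4*c) := by positivity
    rw [← ENNReal.ofReal_le_ofReal_iff hR,
      ENNReal.ofReal_sum_of_nonneg (fun j _ => by positivity)]
    calc ∑ j ∈ Finset.range (ℓ+1),
            ENNReal.ofReal (|ε ^ 2 ^ j| * ‖V j (n+k) (n+k) - V j n n‖)
        = ∑ j ∈ Finset.range (ℓ+1), ENNReal.ofReal |ε ^ 2 ^ j| *
            ENNReal.ofReal (‖V j (n+k) (n+k) - V j n n‖) := by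
          exact Finset.sum_congr rfl fun j _ => ENNReal.ofReal_mul (abs_nonneg _)
      _ ≤ ∑ j ∈ Finset.range (ℓ+1), ENNReal.ofReal |ε ^ 2 ^ j| *
            (ENNReal.ofReal (min 2 |lam k - lam 0|) * matNorm lam (α j) (V j)) := by
          refine Finset.sum_le_sum fun j _ => ?_
          exact mul_le_mul_right ((hΔ j n k hk).trans (mul_le_mul_right (hTd j) _)) _
      _ = ENNReal.ofReal (min 2 |lam k - lam 0|) *
            ∑ j ∈ Finset.range (ℓ+1), ENNReal.ofReal |ε ^ 2 ^ j| * matNorm lam (α j) (V j) := by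
          rw [Finset.mul_sum]
          exact Finset.sum_congr rfl fun j _ => by ring
      _ ≤ ENNReal.ofReal (min 2 |lam k - lam 0|) * ENNReal.ofReal (1/(4*c)) :=
          mul_le_mul_right hsum _
      _ = ENNReal.ofReal (min 2 |lam k - lam 0| / (4*c)) := by
          rw [← ENNReal.ofReal_mul hminnn, mul_one_div]
  -- main lower bound
  have hlow : ∀ (k : Zd d), k ≠ 0 → ∀ n : Zd d,
      min (|lam k - lam 0| / (12*c)) (1/(6*c)) ≤
        ‖((lam (n + k) : ℂ) + ∑ j ∈ Finset.range (ℓ + 1),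
            ((ε ^ 2 ^ j : ℝ) : ℂ) * V j (n + k) (n + k)) -
          ((lam n : ℂ) + ∑ j ∈ Finset.range (ℓ + 1),
            ((ε ^ 2 ^ j : ℝ) : ℂ) * V j n n)‖ := by
    intro k hk n
    have ht0 : 0 < |lam k - lam 0| := htpos k hk
    set t := |lam k - lam 0| with htdef
    have hgne : lam (n+k) - lam n ≠ 0 := sub_ne_zero.mpr (hne n k hk)
    have hg0 : 0 < |lam (n+k) - lam n| := abs_pos.mpr hgne
    -- lower bound on |g|
    have hglb : t / (c * (1+t)) ≤ |lam (n+k) - lam n| := by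
      have hA2' := hA2 n k hk
      have heq : c * (1 + 1/t) = 1 / (t / (c * (1+t))) := by
        have h5 : (1:ℝ) + 1/t = (1+t)/t := by field_simp; ring
        rw [h5, one_div_div]
        ring
      rw [heq] at hA2'
      exact le_of_one_div_le_one_div hg0 hA2'
    -- rewrite the gap
    have hrepr : ((lam (n + k) : ℂ) + ∑ j ∈ Finset.range (ℓ + 1),
            ((ε ^ 2 ^ j : ℝ) : ℂ) * V j (n + k) (n + k)) -
          ((lam n : ℂ) + ∑ j ∈ Finset.range (ℓ + 1),
            ((ε ^ 2 ^ j : ℝ) : ℂ) * V j n n) =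
        ((lam (n+k) - lam n : ℝ) : ℂ) + ∑ j ∈ Finset.range (ℓ+1),
            ((ε ^ 2 ^ j : ℝ) : ℂ) * (V j (n+k) (n+k) - V j n n) := by
      have hsplit : ∑ j ∈ Finset.range (ℓ+1),
            ((ε ^ 2 ^ j : ℝ) : ℂ) * (V j (n+k) (n+k) - V j n n) =
          (∑ j ∈ Finset.range (ℓ+1), ((ε ^ 2 ^ j : ℝ) : ℂ) * V j (n+k) (n+k)) -
            ∑ j ∈ Finset.range (ℓ+1), ((ε ^ 2 ^ j : ℝ) : ℂ) * V j n n := by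
        rw [← Finset.sum_sub_distrib]
        exact Finset.sum_congr rfl fun j _ => mul_sub _ _ _
      rw [hsplit]
      push_cast
      ring
    rw [hrepr]
    set P : ℂ := ∑ j ∈ Finset.range (ℓ+1),
        ((ε ^ 2 ^ j : ℝ) : ℂ) * (V j (n+k) (n+k) - V j n n) with hPdef
    have htri : |lam (n+k) - lam n| - ‖P‖ ≤
        ‖((lam (n+k) - lam n : ℝ) : ℂ) + P‖ := by
      have h3 : ‖((lam (n+k) - lam n : ℝ) : ℂ)‖ ≤
          ‖((lam (n+k) - lam n : ℝ) : ℂ) + P‖ + ‖P‖ := by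
        have h4 : ((lam (n+k) - lam n : ℝ) : ℂ) =
            (((lam (n+k) - lam n : ℝ) : ℂ) + P) - P := by ring
        rw [h4]
        simpa using
          norm_sub_le (((lam (n+k) - lam n : ℝ) : ℂ) + P) P
      rw [Complex.norm_real, Real.norm_eq_abs, abs_sub_comm] at h3
      rw [abs_sub_comm]
      linarith
    have hPb : ‖P‖ ≤ min 2 t / (4 * c) := hP n k hk
    rcases le_total t 2 with hT2 | hT2
    · -- t ≤ 2
      have hP' : ‖P‖ ≤ t / (4*c) := by
        rwa [min_eq_right hT2] at hPb
      have hg2 : t/(3*c) ≤ |lam (n+k) - lam n| := by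
        refine le_trans ?_ hglb
        apply div_le_div_of_nonneg_left ht0.le (by positivity)
        nlinarith
      refine le_trans (min_le_left _ _) ?_
      have hkey : t/(3*c) - t/(4*c) = t/(12*c) := by ring
      linarith
    · -- 2 ≤ t
      have hP' : ‖P‖ ≤ 1/(2*c) := by
        rw [min_eq_left hT2] at hPb
        calc ‖P‖ ≤ 2/(4*c) := hPb
          _ = 1/(2*c) := by ring
      have hg2 : 2/(3*c) ≤ |lam (n+k) - lam n| := by
        refine le_trans ?_ hglb
        rw [div_le_div_iff₀ (by positivity) (by positivity)]
        nlinarith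
      refine le_trans (min_le_right _ _) ?_
      have hkey : 2/(3*c) - 1/(2*c) = 1/(6*c) := by ring
      linarith
  have hminpos : ∀ k : Zd d, k ≠ 0 →
      (0:ℝ) < min (|lam k - lam 0| / (12*c)) (1/(6*c)) := by
    intro k hk
    have := htpos k hk
    exact lt_min (by positivity) (by positivity)
  constructor
  · intro n m hnm heq
    have hk : m - n ≠ 0 := sub_ne_zero.mpr (Ne.symm hnm)
    have hlo := hlow (m - n) hk n
    have hm : n + (m - n) = m := by ring
    rw [hm] at hlo
    rw [← heq] at hlo
    simp only [sub_self, norm_zero] at hlo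
    exact absurd hlo (not_le.mpr (hminpos (m - n) hk))
  · intro k hk n
    have hlo := hlow k hk n
    have hpos := hminpos k hk
    have h1 : 1 / ‖((lam (n + k) : ℂ) + ∑ j ∈ Finset.range (ℓ + 1),
            ((ε ^ 2 ^ j : ℝ) : ℂ) * V j (n + k) (n + k)) -
          ((lam n : ℂ) + ∑ j ∈ Finset.range (ℓ + 1),
            ((ε ^ 2 ^ j : ℝ) : ℂ) * V j n n)‖ ≤
        1 / min (|lam k - lam 0| / (12*c)) (1/(6*c)) :=
      one_div_le_one_div_of_le hpos hlo
    refine h1.trans ?_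
    have ht0 : 0 < |lam k - lam 0| := htpos k hk
    have hk1 : (1:ℝ) ≤ absZ k := habs1 k hk
    have hkγ : (1:ℝ) ≤ absZ k ^ (2*γ) := Real.one_le_rpow hk1 (by positivity)
    have hγ2 : absZ k ^ γ ≤ absZ k ^ (2*γ) :=
      Real.rpow_le_rpow_of_exponent_le hk1 (by linarith)
    have hrnn : (0:ℝ) ≤ absZ k ^ γ := Real.rpow_nonneg (by linarith) γ
    have e1 : 1/(|lam k - lam 0|/(12*c)) ≤ 12 * c^2 * absZ k ^ (2*γ) := by
      rw [one_div_div]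
      have hA1' : 1/|lam k - lam 0| ≤ c * absZ k ^ γ := by
        have := hA1 0 k hk
        rwa [zero_add] at this
      calc (12*c)/|lam k - lam 0| = 12*c*(1/|lam k - lam 0|) := by ring
        _ ≤ 12*c*(c * absZ k ^ γ) := by nlinarith
        _ = 12*c^2 * absZ k ^ γ := by ring
        _ ≤ 12*c^2 * absZ k ^ (2*γ) := by nlinarith
    have e2 : 1/(1/(6*c)) ≤ 12 * c^2 * absZ k ^ (2*γ) := by
      rw [one_div_one_div]
      nlinarith
    rcases min_cases (|lam k - lam 0| / (12*c)) (1/(6*c)) with ⟨h, _⟩ | ⟨h, _⟩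
    · rw [h]; exact e1
    · rw [h]; exact e2
end
end

section
/- Let d ≥ 1, c ≥ 1, γ > 0, let λ : ℤ^d → ℝ satisfy λ_j ≠ λ_0 for all j ≠ 0, and let λ̃ : ℤ^d → ℂ be such that λ̃_{n+k} ≠ λ̃_n for all n and all k ≠ 0, and such that for every k ≠ 0 the sequence (1/(λ̃_{n+k} − λ̃_n))_{n ∈ ℤ^d} has T-norm at most 12 c² |k|^{2γ}. Let α > 0, 0 < δ < α, and let B : ℤ^d × ℤ^d → ℂ be a matrix with ‖B‖_α < ∞. Define the matrix W by W_{m,m} := 1 and W_{m,m+k} := B_{m,m+k} / (λ̃_{m+k} − λ̃_m) for k ≠ 0 (W is the unique solution of the homological equation (λ̃_{m+k} − λ̃_m) W_{m,m+k} = B_{m,m+k}, k ≠ 0, whose diagonal equals that of the identity). Then ‖W − I‖_{α−δ} ≤ 12 c² (2γ/(e δ))^{2γ} ‖B‖_α, where I is the identity matrix. -/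
open scoped ENNReal

noncomputable section

lemma absZ_nonneg {d : ℕ} (k : Zd d) : 0 ≤ absZ k :=
  Finset.sum_nonneg fun _ _ => abs_nonneg _

lemma Tnorm_zero {d : ℕ} (lam : Zd d → ℝ) : Tnorm lam (fun _ => 0) = 0 := by
  simp [Tnorm]

/-- Submultiplicativity of the T-norm. -/
lemma Tnorm_mul_le {d : ℕ} (lam : Zd d → ℝ) (a b : Zd d → ℂ) :
    Tnorm lam (fun n => a n * b n) ≤ Tnorm lam a * Tnorm lam b := by
  set Sa := ⨆ n : Zd d, ENNReal.ofReal (‖a n‖) with hSa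
  set Sb := ⨆ n : Zd d, ENNReal.ofReal (‖b n‖) with hSb
  set Da := ⨆ n : Zd d, ⨆ j : {j : Zd d // j ≠ 0},
      ENNReal.ofReal (‖a (n + j.1) - a n‖ / |lam j.1 - lam 0|) with hDa
  set Db := ⨆ n : Zd d, ⨆ j : {j : Zd d // j ≠ 0},
      ENNReal.ofReal (‖b (n + j.1) - b n‖ / |lam j.1 - lam 0|) with hDb
  have hS : (⨆ n : Zd d, ENNReal.ofReal (‖a n * b n‖)) ≤ Sa * Sb := by
    refine iSup_le fun n => ?_
    rw [norm_mul, ENNReal.ofReal_mul (norm_nonneg _), hSa, hSb]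
    exact mul_le_mul'
      (le_iSup (fun m : Zd d => ENNReal.ofReal (‖a m‖)) n)
      (le_iSup (fun m : Zd d => ENNReal.ofReal (‖b m‖)) n)
  have hD : (⨆ n : Zd d, ⨆ j : {j : Zd d // j ≠ 0},
      ENNReal.ofReal (‖a (n + j.1) * b (n + j.1) - a n * b n‖ /
        |lam j.1 - lam 0|)) ≤ Sa * Db + Da * Sb := by
    refine iSup_le fun n => iSup_le fun j => ?_
    have key : ‖a (n + j.1) * b (n + j.1) - a n * b n‖ / |lam j.1 - lam 0|
        ≤ ‖a (n + j.1)‖ *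
            (‖b (n + j.1) - b n‖ / |lam j.1 - lam 0|) +
          (‖a (n + j.1) - a n‖ / |lam j.1 - lam 0|) * ‖b n‖ := by
      by_cases hc : |lam j.1 - lam 0| = 0
      · simp [hc]
      · have hcpos : 0 < |lam j.1 - lam 0| := lt_of_le_of_ne (abs_nonneg _) (Ne.symm hc)
        rw [mul_div_assoc', div_mul_eq_mul_div, ← add_div]
        refine div_le_div_of_nonneg_right ?_ hcpos.le
        have h1 : a (n + j.1) * b (n + j.1) - a n * b n
            = a (n + j.1) * (b (n + j.1) - b n) + (a (n + j.1) - a n) * b n := by ring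
        rw [h1]
        calc ‖_‖ ≤ ‖a (n + j.1) * (b (n + j.1) - b n)‖ +
              ‖(a (n + j.1) - a n) * b n‖ := norm_add_le _ _
          _ = _ := by rw [norm_mul, norm_mul]
      
    calc ENNReal.ofReal _ ≤ ENNReal.ofReal _ := ENNReal.ofReal_le_ofReal key
      _ ≤ Sa * Db + Da * Sb := by
          rw [ENNReal.ofReal_add (by positivity) (by positivity),
            ENNReal.ofReal_mul (norm_nonneg _),
            ENNReal.ofReal_mul (by positivity)]
          rw [hSa, hSb, hDa, hDb]
          refine add_le_add (mul_le_mul'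
            (le_iSup (fun m : Zd d => ENNReal.ofReal (‖a m‖)) (n + j.1))
            (le_iSup_of_le n (le_iSup (fun i : {j : Zd d // j ≠ 0} =>
              ENNReal.ofReal (‖b (n + i.1) - b n‖ / |lam i.1 - lam 0|)) j)))
            (mul_le_mul'
            (le_iSup_of_le n (le_iSup (fun i : {j : Zd d // j ≠ 0} =>
              ENNReal.ofReal (‖a (n + i.1) - a n‖ / |lam i.1 - lam 0|)) j))
            (le_iSup (fun m : Zd d => ENNReal.ofReal (‖b m‖)) n))
  calc Tnorm lam (fun n => a n * b n) ≤ Sa * Sb + (Sa * Db + Da * Sb) :=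
        add_le_add hS hD
    _ ≤ Sa * Sb + (Sa * Db + Da * Sb) + Da * Db := le_self_add
    _ = (Sa + Da) * (Sb + Db) := by ring
    _ = Tnorm lam a * Tnorm lam b := rfl

/-- The elementary bound `t^p e^{-t} ≤ (p/e)^p`. -/
lemma core_bound (p t : ℝ) (hp : 0 < p) (ht : 0 ≤ t) :
    t ^ p * Real.exp (-t) ≤ (p / Real.exp 1) ^ p := by
  rcases eq_or_lt_of_le ht with h0 | h0
  · rw [← h0, Real.zero_rpow hp.ne', zero_mul]
    positivity
  · have h1 : t / p ≤ Real.exp (t / p - 1) := by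
      have := Real.add_one_le_exp (t / p - 1)
      linarith
    have h2 : (t / p) ^ p ≤ Real.exp (t / p - 1) ^ p :=
      Real.rpow_le_rpow (by positivity) h1 hp.le
    have h3 : Real.exp (t / p - 1) ^ p = Real.exp ((t / p - 1) * p) := by
      rw [← Real.exp_one_rpow (t / p - 1), ← Real.rpow_mul (Real.exp_pos 1).le,
        Real.exp_one_rpow]
    have h4 : (t / p) ^ p = t ^ p / p ^ p := Real.div_rpow h0.le hp.le p
    have h5 : (t / p - 1) * p = t - p := by field_simp
    have h6 : t ^ p ≤ p ^ p * Real.exp (t - p) := by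
      rw [h4] at h2
      rw [h3, h5] at h2
      calc t ^ p = t ^ p / p ^ p * p ^ p := by
            field_simp
          _ ≤ Real.exp (t - p) * p ^ p := by
            apply mul_le_mul_of_nonneg_right h2 (by positivity)
          _ = p ^ p * Real.exp (t - p) := mul_comm _ _
    calc t ^ p * Real.exp (-t) ≤ p ^ p * Real.exp (t - p) * Real.exp (-t) :=
          mul_le_mul_of_nonneg_right h6 (Real.exp_pos _).le
      _ = p ^ p * Real.exp (-p) := by
          rw [mul_assoc, ← Real.exp_add]
          ring_nf
      _ = (p / Real.exp 1) ^ p := by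
          rw [Real.div_rpow hp.le (Real.exp_pos 1).le, Real.exp_one_rpow,
            Real.exp_neg, div_eq_mul_inv]

lemma scalar_bound (p δ x : ℝ) (hp : 0 < p) (hδ : 0 < δ) (hx : 0 ≤ x) :
    x ^ p * Real.exp (-(δ * x)) ≤ (p / (Real.exp 1 * δ)) ^ p := by
  have h := core_bound p (δ * x) hp (by positivity)
  have hδx : (δ * x) ^ p = δ ^ p * x ^ p := Real.mul_rpow hδ.le hx
  rw [hδx] at h
  have hrhs : (p / (Real.exp 1 * δ)) ^ p = (p / Real.exp 1) ^ p / δ ^ p := by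
    rw [← Real.div_rpow (by positivity) hδ.le]
    congr 1
    field_simp
  rw [hrhs, le_div_iff₀ (by positivity : (0:ℝ) < δ ^ p)]
  calc x ^ p * Real.exp (-(δ * x)) * δ ^ p
      = δ ^ p * x ^ p * Real.exp (-(δ * x)) := by ring
    _ ≤ (p / Real.exp 1) ^ p := h

theorem homological_equation_estimate
    (d : ℕ) (hd : 1 ≤ d) (c γ : ℝ) (hc : 1 ≤ c) (hγ : 0 < γ)
    (lam : Zd d → ℝ) (hl0 : ∀ j : Zd d, j ≠ 0 → lam j ≠ lam 0)
    (lamt : Zd d → ℂ)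
    (hnet : ∀ (n k : Zd d), k ≠ 0 → lamt (n + k) ≠ lamt n)
    (hdioph : ∀ k : Zd d, k ≠ 0 →
      Tnorm lam (fun n => (lamt (n + k) - lamt n)⁻¹) ≤
        ENNReal.ofReal (12 * c ^ 2 * absZ k ^ (2 * γ)))
    (α δ : ℝ) (hα : 0 < α) (hδ : 0 < δ) (hδα : δ < α)
    (B : Zd d → Zd d → ℂ) (hB : matNorm lam α B ≠ ⊤) :
    matNorm lam (α - δ)
        (fun n m =>
          (if n = m then (1 : ℂ) else B n m / (lamt m - lamt n)) -
            (if n = m then (1 : ℂ) else 0)) ≤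
      ENNReal.ofReal (12 * c ^ 2 * (2 * γ / (Real.exp 1 * δ)) ^ (2 * γ)) *
        matNorm lam α B := by
  rw [matNorm]
  refine iSup_le fun k => ?_
  by_cases hk : k = 0
  · subst hk
    have hz : (fun n : Zd d =>
        (if n = n + 0 then (1 : ℂ) else B n (n + 0) / (lamt (n + 0) - lamt n)) -
          (if n = n + 0 then (1 : ℂ) else 0)) = fun _ => 0 := by
      funext n
      simp
    rw [hz, Tnorm_zero, mul_zero]
    exact zero_le
  · have hfk : (fun n : Zd d =>
        (if n = n + k then (1 : ℂ) else B n (n + k) / (lamt (n + k) - lamt n)) -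
          (if n = n + k then (1 : ℂ) else 0)) =
        fun n => B n (n + k) * (lamt (n + k) - lamt n)⁻¹ := by
      funext n
      have hne : ¬ n = n + k := by
        intro h
        exact hk (by simpa using (left_eq_add.mp h))
      rw [if_neg hne, if_neg hne, sub_zero, div_eq_mul_inv]
    rw [hfk]
    have h1 : Tnorm lam (fun n => B n (n + k) * (lamt (n + k) - lamt n)⁻¹) ≤
        Tnorm lam (fun n => B n (n + k)) *
          ENNReal.ofReal (12 * c ^ 2 * absZ k ^ (2 * γ)) :=
      (Tnorm_mul_le lam _ _).trans (mul_le_mul' le_rfl (hdioph k hk))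
    have hexp : Real.exp ((α - δ) * absZ k) =
        Real.exp (-(δ * absZ k)) * Real.exp (α * absZ k) := by
      rw [← Real.exp_add]; ring_nf
    have hBk : ENNReal.ofReal (Real.exp (α * absZ k)) *
        Tnorm lam (fun n => B n (n + k)) ≤ matNorm lam α B :=
      le_iSup (fun k => ENNReal.ofReal (Real.exp (α * absZ k)) *
        Tnorm lam (fun n => B n (n + k))) k
    have hsc : Real.exp (-(δ * absZ k)) * (12 * c ^ 2 * absZ k ^ (2 * γ)) ≤
        12 * c ^ 2 * (2 * γ / (Real.exp 1 * δ)) ^ (2 * γ) := by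
      have := scalar_bound (2 * γ) δ (absZ k) (by linarith) hδ (absZ_nonneg k)
      have hc2 : (0:ℝ) ≤ 12 * c ^ 2 := by positivity
      calc Real.exp (-(δ * absZ k)) * (12 * c ^ 2 * absZ k ^ (2 * γ))
          = 12 * c ^ 2 * (absZ k ^ (2 * γ) * Real.exp (-(δ * absZ k))) := by ring
        _ ≤ 12 * c ^ 2 * (2 * γ / (Real.exp 1 * δ)) ^ (2 * γ) :=
            mul_le_mul_of_nonneg_left this hc2
    calc ENNReal.ofReal (Real.exp ((α - δ) * absZ k)) *
          Tnorm lam (fun n => B n (n + k) * (lamt (n + k) - lamt n)⁻¹)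
        ≤ ENNReal.ofReal (Real.exp ((α - δ) * absZ k)) *
            (Tnorm lam (fun n => B n (n + k)) *
              ENNReal.ofReal (12 * c ^ 2 * absZ k ^ (2 * γ))) :=
          mul_le_mul' le_rfl h1
      _ = ENNReal.ofReal (Real.exp (-(δ * absZ k)) * (12 * c ^ 2 * absZ k ^ (2 * γ))) *
            (ENNReal.ofReal (Real.exp (α * absZ k)) * Tnorm lam (fun n => B n (n + k))) := by
          rw [hexp, ENNReal.ofReal_mul (Real.exp_pos _).le,
            ENNReal.ofReal_mul (Real.exp_pos _).le]
          ring
      _ ≤ ENNReal.ofReal (12 * c ^ 2 * (2 * γ / (Real.exp 1 * δ)) ^ (2 * γ)) *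
            matNorm lam α B :=
          mul_le_mul' (ENNReal.ofReal_le_ofReal hsc) hBk
end
end

section
/- Let d ≥ 1, let λ : ℤ^d → ℝ satisfy λ_j ≠ λ_0 for all j ≠ 0, let α > 0 and 0 < δ < α. If X, Y : ℤ^d × ℤ^d → ℂ are matrices with ‖X‖_{α−δ} < ∞ and ‖Y‖_α < ∞, then the matrix product XY, with entries (XY)_{n,m} := Σ_{l ∈ ℤ^d} X_{n,l} Y_{l,m} (the series converging absolutely), satisfies ‖XY‖_{α−δ} ≤ q(δ) · ‖X‖_{α−δ} · ‖Y‖_α, where q(δ) := ((1 + e^{−δ})/(1 − e^{−δ}))^d. Moreover, if in addition δ ≤ 1, then q(δ) < (3/δ)^d. -/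
open scoped ENNReal

noncomputable section

lemma absZ_add_le {d : ℕ} (a b : Zd d) : absZ (a + b) ≤ absZ a + absZ b := by
  rw [absZ, absZ, absZ, ← Finset.sum_add_distrib]
  exact Finset.sum_le_sum fun i _ => by
    have : ((a + b) i : ℝ) = (a i : ℝ) + (b i : ℝ) := by push_cast [Pi.add_apply]; ring
    rw [this]; exact abs_add_le _ _

lemma absZ_le_add_sub {d : ℕ} (k p : Zd d) : absZ k ≤ absZ p + absZ (k - p) := by
  have := absZ_add_le p (k - p); simpa using this

lemma int_geom_partial (r : ℝ) (h0 : 0 ≤ r) (h1 : r < 1) (F : Finset ℤ) :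
    ∑ m ∈ F, r ^ m.natAbs ≤ (1 + r) / (1 - r) := by
  classical
  have hsum : Summable (fun n : ℕ => r ^ n) := summable_geometric_of_lt_one h0 h1
  have hr1 : (0:ℝ) < 1 - r := by linarith
  have hsplit := Finset.sum_filter_add_sum_filter_not F (fun m => 0 ≤ m)
      (fun m => r ^ m.natAbs)
  rw [← hsplit]
  have hpos : ∑ m ∈ F.filter (fun m => 0 ≤ m), r ^ m.natAbs ≤ (1 - r)⁻¹ := by
    have hinj : ∀ x ∈ F.filter (fun m => 0 ≤ m), ∀ y ∈ F.filter (fun m => 0 ≤ m),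
        x.natAbs = y.natAbs → x = y := by
      intro x hx y hy hxy
      simp only [Finset.mem_filter] at hx hy
      omega
    have heq : ∑ n ∈ (F.filter (fun m => 0 ≤ m)).image Int.natAbs, r ^ n
        = ∑ m ∈ F.filter (fun m => 0 ≤ m), r ^ m.natAbs := Finset.sum_image hinj
    rw [← heq]
    calc ∑ n ∈ (F.filter (fun m => 0 ≤ m)).image Int.natAbs, r ^ n
        ≤ ∑' n : ℕ, r ^ n := Summable.sum_le_tsum _ (fun i _ => pow_nonneg h0 _) hsum
      _ = (1 - r)⁻¹ := tsum_geometric_of_lt_one h0 h1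
  have hneg : ∑ m ∈ F.filter (fun m => ¬ 0 ≤ m), r ^ m.natAbs ≤ r * (1 - r)⁻¹ := by
    have hsum' : Summable (fun n : ℕ => r ^ (n + 1)) := by
      simpa [pow_succ, mul_comm] using hsum.mul_left r
    have hinj : ∀ x ∈ F.filter (fun m => ¬ 0 ≤ m), ∀ y ∈ F.filter (fun m => ¬ 0 ≤ m),
        (-x - 1).toNat = (-y - 1).toNat → x = y := by
      intro x hx y hy hxy
      simp only [Finset.mem_filter] at hx hy
      omega
    have heq : ∑ n ∈ (F.filter (fun m => ¬ 0 ≤ m)).image (fun m => (-m - 1).toNat),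
          r ^ (n + 1) = ∑ m ∈ F.filter (fun m => ¬ 0 ≤ m), r ^ ((-m - 1).toNat + 1) :=
      Finset.sum_image hinj
    have heq2 : ∑ m ∈ F.filter (fun m => ¬ 0 ≤ m), r ^ ((-m - 1).toNat + 1)
        = ∑ m ∈ F.filter (fun m => ¬ 0 ≤ m), r ^ m.natAbs := by
      apply Finset.sum_congr rfl
      intro m hm
      simp only [Finset.mem_filter] at hm
      congr 1
      omega
    rw [← heq2, ← heq]
    have htsum : ∑' n : ℕ, r ^ (n + 1) = r * (1 - r)⁻¹ := by
      have : (fun n : ℕ => r ^ (n + 1)) = fun n : ℕ => r * r ^ n := by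
        funext n; rw [pow_succ, mul_comm]
      rw [this, tsum_mul_left, tsum_geometric_of_lt_one h0 h1]
    rw [← htsum]
    exact Summable.sum_le_tsum _ (fun i _ => pow_nonneg h0 _) hsum'
  calc ∑ m ∈ F.filter (fun m => 0 ≤ m), r ^ m.natAbs
        + ∑ m ∈ F.filter (fun m => ¬ 0 ≤ m), r ^ m.natAbs
      ≤ (1 - r)⁻¹ + r * (1 - r)⁻¹ := add_le_add hpos hneg
    _ = (1 + r) / (1 - r) := by field_simp

set_option maxHeartbeats 1000000 in
lemma pi_geom_partial {d : ℕ} (r : ℝ) (h0 : 0 ≤ r) (h1 : r < 1) (F : Finset (Zd d)) :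
    ∑ q ∈ F, ∏ i, r ^ (q i).natAbs ≤ ((1 + r) / (1 - r)) ^ d := by
  calc ∑ q ∈ F, ∏ i, r ^ (q i).natAbs
      ≤ ∑ q ∈ Fintype.piFinset (fun i => F.image (fun q => q i)), ∏ i, r ^ (q i).natAbs := by
        apply Finset.sum_le_sum_of_subset_of_nonneg
        · intro q hq
          simp only [Fintype.mem_piFinset, Finset.mem_image]
          exact fun i => ⟨q, hq, rfl⟩
        · intro q _ _
          exact Finset.prod_nonneg fun i _ => pow_nonneg h0 _
    _ = ∏ i, ∑ n ∈ F.image (fun q => q i), r ^ n.natAbs :=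
        (Finset.prod_univ_sum (κ := fun _ : Fin d => ℤ)
          (fun i => F.image (fun q => q i)) (fun _ n => r ^ n.natAbs)).symm
    _ ≤ ∏ i : Fin d, (1 + r) / (1 - r) := by
        apply Finset.prod_le_prod
        · exact fun i _ => Finset.sum_nonneg fun n _ => pow_nonneg h0 _
        · exact fun i _ => int_geom_partial r h0 h1 _
    _ = ((1 + r) / (1 - r)) ^ d := by simp [div_pow]

lemma exp_absZ_eq {d : ℕ} (c : ℝ) (q : Zd d) :
    Real.exp (-(c * absZ q)) = ∏ i, (Real.exp (-c)) ^ (q i).natAbs := by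
  have h1 : -(c * absZ q) = ∑ i, -(c * |(q i : ℝ)|) := by
    rw [absZ, Finset.mul_sum, ← Finset.sum_neg_distrib]
  rw [h1, Real.exp_sum]
  apply Finset.prod_congr rfl
  intro i _
  rw [← Real.exp_nat_mul]
  congr 1
  have : |(q i : ℝ)| = ((q i).natAbs : ℝ) := by
    rw [Nat.cast_natAbs, Int.cast_abs]
  rw [this]; ring

lemma exp_geom_summable {d : ℕ} (c : ℝ) (hc : 0 < c) :
    Summable (fun q : Zd d => Real.exp (-(c * absZ q))) := by
  have h0 : 0 ≤ Real.exp (-c) := (Real.exp_pos _).le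
  have h1 : Real.exp (-c) < 1 := by
    rw [Real.exp_lt_one_iff]; linarith
  apply summable_of_sum_le (c := ((1 + Real.exp (-c)) / (1 - Real.exp (-c))) ^ d)
  · intro q; positivity
  · intro F
    calc ∑ q ∈ F, Real.exp (-(c * absZ q))
        = ∑ q ∈ F, ∏ i, (Real.exp (-c)) ^ (q i).natAbs :=
          Finset.sum_congr rfl fun q _ => exp_absZ_eq c q
      _ ≤ _ := pi_geom_partial _ h0 h1 F

lemma exp_geom_tsum_le {d : ℕ} (c : ℝ) (hc : 0 < c) :
    ∑' q : Zd d, Real.exp (-(c * absZ q)) ≤ ((1 + Real.exp (-c)) / (1 - Real.exp (-c))) ^ d := by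
  have h0 : 0 ≤ Real.exp (-c) := (Real.exp_pos _).le
  have h1 : Real.exp (-c) < 1 := by rw [Real.exp_lt_one_iff]; linarith
  apply Summable.tsum_le_of_sum_le (exp_geom_summable c hc)
  intro F
  calc ∑ q ∈ F, Real.exp (-(c * absZ q))
      = ∑ q ∈ F, ∏ i, (Real.exp (-c)) ^ (q i).natAbs :=
        Finset.sum_congr rfl fun q _ => exp_absZ_eq c q
    _ ≤ _ := pi_geom_partial _ h0 h1 F

lemma Tnorm_le_of_bounds {d : ℕ} (lam : Zd d → ℝ)
    (hl : ∀ j : Zd d, j ≠ 0 → lam j ≠ lam 0)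
    (a : Zd d → ℂ) (U V : ℝ)
    (hU : ∀ n, ‖a n‖ ≤ U)
    (hVb : ∀ n (j : Zd d), j ≠ 0 → ‖a (n + j) - a n‖ ≤ V * |lam j - lam 0|) :
    Tnorm lam a ≤ ENNReal.ofReal U + ENNReal.ofReal V := by
  unfold Tnorm
  apply add_le_add
  · exact iSup_le fun n => ENNReal.ofReal_le_ofReal (hU n)
  · apply iSup_le; intro n; apply iSup_le; intro j
    apply ENNReal.ofReal_le_ofReal
    have hlj : 0 < |lam j.1 - lam 0| := abs_pos.mpr (sub_ne_zero.mpr (hl j.1 j.2))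
    rw [div_le_iff₀ hlj]
    exact hVb n j.1 j.2

lemma matNorm_bounds {d : ℕ} (lam : Zd d → ℝ)
    (hl : ∀ j : Zd d, j ≠ 0 → lam j ≠ lam 0)
    (c : ℝ) (A : Zd d → Zd d → ℂ) (hA : matNorm lam c A ≠ ⊤) :
    ∃ a b : Zd d → ℝ, (∀ k, 0 ≤ a k) ∧ (∀ k, 0 ≤ b k) ∧
      (∀ k, a k + b k ≤ (matNorm lam c A).toReal) ∧
      (∀ n k, ‖A n (n + k)‖ ≤ a k * Real.exp (-(c * absZ k))) ∧
      (∀ n k (j : Zd d), j ≠ 0 →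
        ‖A (n + j) (n + j + k) - A n (n + k)‖ ≤
          b k * Real.exp (-(c * absZ k)) * |lam j - lam 0|) := by
  set N := matNorm lam c A with hN
  set S1 : Zd d → ℝ≥0∞ := fun k => ⨆ n : Zd d, ENNReal.ofReal (‖A n (n + k)‖)
  set S2 : Zd d → ℝ≥0∞ := fun k => ⨆ n : Zd d, ⨆ j : {j : Zd d // j ≠ 0},
      ENNReal.ofReal (‖A (n + j.1) (n + j.1 + k) - A n (n + k)‖ / |lam j.1 - lam 0|)
  set E : Zd d → ℝ≥0∞ := fun k => ENNReal.ofReal (Real.exp (c * absZ k))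
  have hTnorm : ∀ k, Tnorm lam (fun n => A n (n + k)) = S1 k + S2 k := fun k => rfl
  have hkN : ∀ k, E k * (S1 k + S2 k) ≤ N := by
    intro k
    rw [← hTnorm]
    exact le_iSup (fun k => E k * Tnorm lam (fun n => A n (n + k))) k
  have hfin1 : ∀ k, E k * S1 k ≠ ⊤ := fun k =>
    ne_top_of_le_ne_top hA (le_trans (mul_le_mul_right le_self_add _) (hkN k))
  have hfin2 : ∀ k, E k * S2 k ≠ ⊤ := fun k =>
    ne_top_of_le_ne_top hA (le_trans (mul_le_mul_right le_add_self _) (hkN k))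
  refine ⟨fun k => (E k * S1 k).toReal, fun k => (E k * S2 k).toReal,
    fun k => ENNReal.toReal_nonneg, fun k => ENNReal.toReal_nonneg, ?_, ?_, ?_⟩
  · intro k
    rw [← ENNReal.toReal_add (hfin1 k) (hfin2 k), ← mul_add]
    exact ENNReal.toReal_mono hA (hkN k)
  · intro n k
    have h1 : ENNReal.ofReal (‖A n (n + k)‖) ≤ S1 k :=
      le_iSup (fun n => ENNReal.ofReal (‖A n (n + k)‖)) n
    have h2 : Real.exp (c * absZ k) * ‖A n (n + k)‖ ≤ (E k * S1 k).toReal := by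
      have := ENNReal.toReal_mono (hfin1 k) (mul_le_mul_right h1 (E k))
      rwa [ENNReal.toReal_mul, ENNReal.toReal_ofReal (Real.exp_pos _).le,
        ENNReal.toReal_ofReal (norm_nonneg _)] at this
    have hEpos := Real.exp_pos (c * absZ k)
    rw [Real.exp_neg, mul_comm ((E k * S1 k).toReal), ← div_eq_inv_mul, le_div_iff₀ hEpos]
    linarith [h2]
  · intro n k j hj
    have hlj : 0 < |lam j - lam 0| := abs_pos.mpr (sub_ne_zero.mpr (hl j hj))
    have h1 : ENNReal.ofReal (‖A (n + j) (n + j + k) - A n (n + k)‖ / |lam j - lam 0|)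
        ≤ S2 k := by
      refine le_trans ?_ (le_iSup (fun n => ⨆ j : {j : Zd d // j ≠ 0},
        ENNReal.ofReal (‖A (n + j.1) (n + j.1 + k) - A n (n + k)‖ / |lam j.1 - lam 0|)) n)
      exact le_iSup (fun j : {j : Zd d // j ≠ 0} =>
        ENNReal.ofReal (‖A (n + j.1) (n + j.1 + k) - A n (n + k)‖ / |lam j.1 - lam 0|)) ⟨j, hj⟩
    have h2 : Real.exp (c * absZ k) *
        (‖A (n + j) (n + j + k) - A n (n + k)‖ / |lam j - lam 0|)
        ≤ (E k * S2 k).toReal := by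
      have := ENNReal.toReal_mono (hfin2 k) (mul_le_mul_right h1 (E k))
      rwa [ENNReal.toReal_mul, ENNReal.toReal_ofReal (Real.exp_pos _).le,
        ENNReal.toReal_ofReal (div_nonneg (norm_nonneg _) (abs_nonneg _))] at this
    have hEpos := Real.exp_pos (c * absZ k)
    have h3 : ‖A (n + j) (n + j + k) - A n (n + k)‖ / |lam j - lam 0|
        ≤ (E k * S2 k).toReal * Real.exp (-(c * absZ k)) := by
      rw [Real.exp_neg, ← div_eq_mul_inv, le_div_iff₀ hEpos]
      linarith [h2]
    calc ‖A (n + j) (n + j + k) - A n (n + k)‖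
        = ‖A (n + j) (n + j + k) - A n (n + k)‖ / |lam j - lam 0|
            * |lam j - lam 0| := (div_mul_cancel₀ _ hlj.ne').symm
      _ ≤ (E k * S2 k).toReal * Real.exp (-(c * absZ k)) * |lam j - lam 0| :=
          mul_le_mul_of_nonneg_right h3 (abs_nonneg _)

lemma exp_bound {d : ℕ} (α δ : ℝ) (h : 0 ≤ α - δ) (k p : Zd d) :
    Real.exp (-((α - δ) * absZ p)) * Real.exp (-(α * absZ (k - p)))
      ≤ Real.exp (-(δ * absZ (k - p))) * Real.exp (-((α - δ) * absZ k)) := by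
  rw [← Real.exp_add, ← Real.exp_add]
  apply Real.exp_le_exp.mpr
  nlinarith [mul_le_mul_of_nonneg_left (absZ_le_add_sub k p) h]

theorem matNorm_product_estimate
    (d : ℕ) (hd : 1 ≤ d)
    (lam : Zd d → ℝ) (hl0 : ∀ j : Zd d, j ≠ 0 → lam j ≠ lam 0)
    (α δ : ℝ) (hα : 0 < α) (hδ : 0 < δ) (hδα : δ < α)
    (X Y : Zd d → Zd d → ℂ)
    (hX : matNorm lam (α - δ) X ≠ ⊤) (hY : matNorm lam α Y ≠ ⊤) :
    (∀ n m : Zd d, Summable fun l : Zd d => ‖X n l * Y l m‖) ∧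
    matNorm lam (α - δ) (fun n m => ∑' l : Zd d, X n l * Y l m) ≤
      ENNReal.ofReal (((1 + Real.exp (-δ)) / (1 - Real.exp (-δ))) ^ d) *
        matNorm lam (α - δ) X * matNorm lam α Y ∧
    (δ ≤ 1 → ((1 + Real.exp (-δ)) / (1 - Real.exp (-δ))) ^ d < (3 / δ) ^ d) := by
  have hαδ : 0 < α - δ := by linarith
  obtain ⟨aX, bX, haX0, hbX0, habX, haX, hbX⟩ := matNorm_bounds lam hl0 (α - δ) X hX
  obtain ⟨cY, eY, hcY0, heY0, hceY, hcY, heY⟩ := matNorm_bounds lam hl0 α Y hY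
  set s := (matNorm lam (α - δ) X).toReal with hs
  set t := (matNorm lam α Y).toReal with ht
  have hs0 : 0 ≤ s := ENNReal.toReal_nonneg
  have ht0 : 0 ≤ t := ENNReal.toReal_nonneg
  have haXs : ∀ k, aX k ≤ s := fun k => by have h1 := habX k; have h2 := hbX0 k; linarith
  have hbXs : ∀ k, bX k ≤ s := fun k => by have h1 := habX k; have h2 := haX0 k; linarith
  have hcYt : ∀ k, cY k ≤ t := fun k => by have h1 := hceY k; have h2 := heY0 k; linarith
  have heYt : ∀ k, eY k ≤ t := fun k => by have h1 := hceY k; have h2 := hcY0 k; linarith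
  -- entry bounds
  have hXe : ∀ n l, ‖X n l‖ ≤ aX (l - n) * Real.exp (-((α - δ) * absZ (l - n))) := by
    intro n l
    have h := haX n (l - n)
    rwa [show n + (l - n) = l from by abel] at h
  have hYe : ∀ n l, ‖Y n l‖ ≤ cY (l - n) * Real.exp (-(α * absZ (l - n))) := by
    intro n l
    have h := hcY n (l - n)
    rwa [show n + (l - n) = l from by abel] at h
  -- summability (part 1)
  have hgeo : ∀ n : Zd d, Summable (fun l : Zd d => Real.exp (-((α - δ) * absZ (l - n)))) := by
    intro n
    have heq : (fun l : Zd d => Real.exp (-((α - δ) * absZ (l - n)))) =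
        (fun q : Zd d => Real.exp (-((α - δ) * absZ q))) ∘ ⇑(Equiv.subRight n) := rfl
    rw [heq, Equiv.summable_iff]
    exact exp_geom_summable _ hαδ
  have habs : ∀ n m : Zd d, Summable fun l : Zd d => ‖X n l * Y l m‖ := by
    intro n m
    apply Summable.of_nonneg_of_le (fun l => norm_nonneg _) ?_ ((hgeo n).mul_left (s * t))
    intro l
    rw [norm_mul]
    have h2 : ‖Y l m‖ ≤ t := by
      have h := hYe l m
      have he1 : Real.exp (-(α * absZ (m - l))) ≤ 1 :=
        Real.exp_le_one_iff.mpr (by nlinarith [absZ_nonneg (m - l)])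
      calc ‖Y l m‖ ≤ cY (m - l) * Real.exp (-(α * absZ (m - l))) := h
        _ ≤ t * 1 := mul_le_mul (hcYt _) he1 (Real.exp_pos _).le ht0
        _ = t := mul_one t
    have h3 : ‖X n l‖ ≤ s * Real.exp (-((α - δ) * absZ (l - n))) :=
      le_trans (hXe n l) (mul_le_mul_of_nonneg_right (haXs _) (Real.exp_pos _).le)
    calc ‖X n l‖ * ‖Y l m‖
        ≤ (s * Real.exp (-((α - δ) * absZ (l - n)))) * t :=
          mul_le_mul h3 h2 (norm_nonneg _) (by positivity)
      _ = s * t * Real.exp (-((α - δ) * absZ (l - n))) := by ring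
  -- part 3
  have hq3 : δ ≤ 1 → ((1 + Real.exp (-δ)) / (1 - Real.exp (-δ))) ^ d < (3 / δ) ^ d := by
    intro hδ1
    have hr0 : 0 < Real.exp (-δ) := Real.exp_pos _
    have hr1 : Real.exp (-δ) < 1 := by rw [Real.exp_lt_one_iff]; linarith
    have hkey : Real.exp (-δ) * (1 + δ) < 1 := by
      have h := Real.add_one_lt_exp (x := δ) (by linarith)
      have h2 : Real.exp (-δ) * Real.exp δ = 1 := by rw [← Real.exp_add]; simp
      nlinarith [Real.exp_pos δ]
    have hbase : (1 + Real.exp (-δ)) / (1 - Real.exp (-δ)) < 3 / δ := by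
      rw [div_lt_div_iff₀ (by linarith) hδ]
      nlinarith [mul_pos (show (0:ℝ) < 1 - Real.exp (-δ) * (1 + δ) by linarith)
        (show (0:ℝ) < δ + 3 by linarith),
        mul_nonneg hδ.le (sub_nonneg.mpr hδ1)]
    exact pow_lt_pow_left₀ hbase (div_nonneg (by linarith) (by linarith)) (by omega)
  refine ⟨habs, ?_, hq3⟩
  -- main estimate
  set Q := ((1 + Real.exp (-δ)) / (1 - Real.exp (-δ))) ^ d with hQdef
  have hr1 : Real.exp (-δ) < 1 := by rw [Real.exp_lt_one_iff]; linarith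
  have hQ0 : 0 ≤ Q := pow_nonneg (div_nonneg (by positivity) (by linarith)) d
  rw [matNorm]
  apply iSup_le
  intro k
  have hgeo2 : Summable (fun p : Zd d => Real.exp (-(δ * absZ (k - p)))) := by
    have heq : (fun p : Zd d => Real.exp (-(δ * absZ (k - p)))) =
        (fun q : Zd d => Real.exp (-(δ * absZ q))) ∘ ⇑(Equiv.subLeft k) := rfl
    rw [heq, Equiv.summable_iff]
    exact exp_geom_summable _ hδ
  have hg1nn : ∀ p : Zd d, 0 ≤ aX p * cY (k - p) * Real.exp (-(δ * absZ (k - p))) :=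
    fun p => mul_nonneg (mul_nonneg (haX0 p) (hcY0 _)) (Real.exp_pos _).le
  have hg2nn : ∀ p : Zd d,
      0 ≤ (bX p * cY (k - p) + aX p * eY (k - p)) * Real.exp (-(δ * absZ (k - p))) :=
    fun p => mul_nonneg (add_nonneg (mul_nonneg (hbX0 p) (hcY0 _))
      (mul_nonneg (haX0 p) (heY0 _))) (Real.exp_pos _).le
  have hg1s : Summable (fun p : Zd d => aX p * cY (k - p) * Real.exp (-(δ * absZ (k - p)))) := by
    apply Summable.of_nonneg_of_le hg1nn ?_ (hgeo2.mul_left (s * t))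
    intro p
    have : aX p * cY (k - p) ≤ s * t := mul_le_mul (haXs p) (hcYt _) (hcY0 _) hs0
    exact mul_le_mul_of_nonneg_right this (Real.exp_pos _).le
  have hg2s : Summable (fun p : Zd d =>
      (bX p * cY (k - p) + aX p * eY (k - p)) * Real.exp (-(δ * absZ (k - p)))) := by
    apply Summable.of_nonneg_of_le hg2nn ?_ (hgeo2.mul_left (s * t + s * t))
    intro p
    have h1 : bX p * cY (k - p) ≤ s * t := mul_le_mul (hbXs p) (hcYt _) (hcY0 _) hs0
    have h2 : aX p * eY (k - p) ≤ s * t := mul_le_mul (haXs p) (heYt _) (heY0 _) hs0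
    exact mul_le_mul_of_nonneg_right (by linarith) (Real.exp_pos _).le
  set W1 := ∑' p : Zd d, aX p * cY (k - p) * Real.exp (-(δ * absZ (k - p))) with hW1def
  set W2 := ∑' p : Zd d,
      (bX p * cY (k - p) + aX p * eY (k - p)) * Real.exp (-(δ * absZ (k - p))) with hW2def
  have hW1nn : 0 ≤ W1 := tsum_nonneg hg1nn
  have hW2nn : 0 ≤ W2 := tsum_nonneg hg2nn
  have hW12 : W1 + W2 ≤ s * t * Q := by
    rw [hW1def, hW2def, ← Summable.tsum_add hg1s hg2s]
    calc ∑' p : Zd d, (aX p * cY (k - p) * Real.exp (-(δ * absZ (k - p))) +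
          (bX p * cY (k - p) + aX p * eY (k - p)) * Real.exp (-(δ * absZ (k - p))))
        ≤ ∑' p : Zd d, s * t * Real.exp (-(δ * absZ (k - p))) := by
          apply Summable.tsum_le_tsum ?_ (hg1s.add hg2s) (hgeo2.mul_left _)
          intro p
          have hc : aX p * cY (k - p) + (bX p * cY (k - p) + aX p * eY (k - p)) ≤ s * t := by
            nlinarith [mul_le_mul (habX p) (hceY (k - p))
              (add_nonneg (hcY0 _) (heY0 _)) hs0, mul_nonneg (hbX0 p) (heY0 (k - p))]
          calc aX p * cY (k - p) * Real.exp (-(δ * absZ (k - p))) +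
                (bX p * cY (k - p) + aX p * eY (k - p)) * Real.exp (-(δ * absZ (k - p)))
              = (aX p * cY (k - p) + (bX p * cY (k - p) + aX p * eY (k - p))) *
                  Real.exp (-(δ * absZ (k - p))) := by ring
            _ ≤ s * t * Real.exp (-(δ * absZ (k - p))) :=
                mul_le_mul_of_nonneg_right hc (Real.exp_pos _).le
      _ = s * t * ∑' p : Zd d, Real.exp (-(δ * absZ (k - p))) := tsum_mul_left
      _ = s * t * ∑' q : Zd d, Real.exp (-(δ * absZ q)) := by
          congr 1
          exact (Equiv.subLeft k).tsum_eq (fun q => Real.exp (-(δ * absZ q)))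
      _ ≤ s * t * Q := mul_le_mul_of_nonneg_left (exp_geom_tsum_le δ hδ) (mul_nonneg hs0 ht0)
  -- diagonal reindexing
  have hZdiag : ∀ n : Zd d, (∑' l : Zd d, X n l * Y l (n + k)) =
      ∑' p : Zd d, X n (n + p) * Y (n + p) (n + k) :=
    fun n => ((Equiv.addLeft n).tsum_eq (fun l => X n l * Y l (n + k))).symm
  -- termwise bound for the sup part
  have hterm1 : ∀ n p : Zd d, ‖X n (n + p) * Y (n + p) (n + k)‖ ≤
      aX p * cY (k - p) * Real.exp (-(δ * absZ (k - p))) * Real.exp (-((α - δ) * absZ k)) := by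
    intro n p
    rw [norm_mul]
    have h1 := haX n p
    have h2 : ‖Y (n + p) (n + k)‖ ≤
        cY (k - p) * Real.exp (-(α * absZ (k - p))) := by
      have h := hcY (n + p) (k - p)
      rwa [show n + p + (k - p) = n + k from by abel] at h
    calc ‖X n (n + p)‖ * ‖Y (n + p) (n + k)‖
        ≤ (aX p * Real.exp (-((α - δ) * absZ p))) *
            (cY (k - p) * Real.exp (-(α * absZ (k - p)))) :=
          mul_le_mul h1 h2 (norm_nonneg _)
            (mul_nonneg (haX0 p) (Real.exp_pos _).le)
      _ = (aX p * cY (k - p)) *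
            (Real.exp (-((α - δ) * absZ p)) * Real.exp (-(α * absZ (k - p)))) := by ring
      _ ≤ (aX p * cY (k - p)) *
            (Real.exp (-(δ * absZ (k - p))) * Real.exp (-((α - δ) * absZ k))) :=
          mul_le_mul_of_nonneg_left (exp_bound α δ hαδ.le k p)
            (mul_nonneg (haX0 p) (hcY0 _))
      _ = aX p * cY (k - p) * Real.exp (-(δ * absZ (k - p))) *
            Real.exp (-((α - δ) * absZ k)) := by ring
  have hsn1 : ∀ n : Zd d, Summable (fun p : Zd d =>
      ‖X n (n + p) * Y (n + p) (n + k)‖) := by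
    intro n
    exact Summable.of_nonneg_of_le (fun p => norm_nonneg _) (hterm1 n)
      (hg1s.mul_right _)
  have hsumCp : ∀ n : Zd d, Summable (fun p : Zd d => X n (n + p) * Y (n + p) (n + k)) := by
    intro n
    apply Summable.of_norm
    simpa using hsn1 n
  have hAbound : ∀ n : Zd d, ‖∑' l : Zd d, X n l * Y l (n + k)‖ ≤
      W1 * Real.exp (-((α - δ) * absZ k)) := by
    intro n
    rw [hZdiag n]
    calc ‖∑' p : Zd d, X n (n + p) * Y (n + p) (n + k)‖
        ≤ ∑' p : Zd d, ‖X n (n + p) * Y (n + p) (n + k)‖ := by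
          have h := norm_tsum_le_tsum_norm (f := fun p : Zd d => X n (n + p) * Y (n + p) (n + k))
            (by simpa using hsn1 n)
          simpa using h
      _ ≤ ∑' p : Zd d, aX p * cY (k - p) * Real.exp (-(δ * absZ (k - p))) *
            Real.exp (-((α - δ) * absZ k)) :=
          Summable.tsum_le_tsum (hterm1 n) (hsn1 n) (hg1s.mul_right _)
      _ = W1 * Real.exp (-((α - δ) * absZ k)) := tsum_mul_right
  -- termwise bound for the difference part
  have hterm2 : ∀ (n p j : Zd d), j ≠ 0 →
      ‖X (n + j) (n + j + p) * Y (n + j + p) (n + j + k) -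
        X n (n + p) * Y (n + p) (n + k)‖ ≤
      (bX p * cY (k - p) + aX p * eY (k - p)) * Real.exp (-(δ * absZ (k - p))) *
        (Real.exp (-((α - δ) * absZ k)) * |lam j - lam 0|) := by
    intro n p j hj
    have hXX := hbX n p j hj
    have hYY : ‖Y (n + j + p) (n + j + k) - Y (n + p) (n + k)‖ ≤
        eY (k - p) * Real.exp (-(α * absZ (k - p))) * |lam j - lam 0| := by
      have h := heY (n + p) (k - p) j hj
      rwa [show n + p + j + (k - p) = n + j + k from by abel,
        show n + p + j = n + j + p from by abel,
        show n + p + (k - p) = n + k from by abel] at h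
    have hY' : ‖Y (n + j + p) (n + j + k)‖ ≤
        cY (k - p) * Real.exp (-(α * absZ (k - p))) := by
      have h := hcY (n + j + p) (k - p)
      rwa [show n + j + p + (k - p) = n + j + k from by abel] at h
    have hXo : ‖X n (n + p)‖ ≤ aX p * Real.exp (-((α - δ) * absZ p)) := haX n p
    calc ‖X (n + j) (n + j + p) * Y (n + j + p) (n + j + k) -
            X n (n + p) * Y (n + p) (n + k)‖
        = ‖(X (n + j) (n + j + p) - X n (n + p)) * Y (n + j + p) (n + j + k) +
            X n (n + p) * (Y (n + j + p) (n + j + k) - Y (n + p) (n + k))‖ := by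
          congr 1; ring
      _ ≤ ‖(X (n + j) (n + j + p) - X n (n + p)) * Y (n + j + p) (n + j + k)‖ +
            ‖X n (n + p) * (Y (n + j + p) (n + j + k) - Y (n + p) (n + k))‖ :=
          norm_add_le _ _
      _ = ‖X (n + j) (n + j + p) - X n (n + p)‖ *
            ‖Y (n + j + p) (n + j + k)‖ +
          ‖X n (n + p)‖ *
            ‖Y (n + j + p) (n + j + k) - Y (n + p) (n + k)‖ := by
          rw [norm_mul, norm_mul]
      _ ≤ (bX p * Real.exp (-((α - δ) * absZ p)) * |lam j - lam 0|) *
            (cY (k - p) * Real.exp (-(α * absZ (k - p)))) +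
          (aX p * Real.exp (-((α - δ) * absZ p))) *
            (eY (k - p) * Real.exp (-(α * absZ (k - p))) * |lam j - lam 0|) :=
          add_le_add
            (mul_le_mul hXX hY' (norm_nonneg _)
              (mul_nonneg (mul_nonneg (hbX0 p) (Real.exp_pos _).le) (abs_nonneg _)))
            (mul_le_mul hXo hYY (norm_nonneg _)
              (mul_nonneg (haX0 p) (Real.exp_pos _).le))
      _ = (bX p * cY (k - p) + aX p * eY (k - p)) *
            (Real.exp (-((α - δ) * absZ p)) * Real.exp (-(α * absZ (k - p)))) *
            |lam j - lam 0| := by ring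
      _ ≤ (bX p * cY (k - p) + aX p * eY (k - p)) *
            (Real.exp (-(δ * absZ (k - p))) * Real.exp (-((α - δ) * absZ k))) *
            |lam j - lam 0| := by
          apply mul_le_mul_of_nonneg_right _ (abs_nonneg _)
          exact mul_le_mul_of_nonneg_left (exp_bound α δ hαδ.le k p)
            (add_nonneg (mul_nonneg (hbX0 p) (hcY0 _)) (mul_nonneg (haX0 p) (heY0 _)))
      _ = (bX p * cY (k - p) + aX p * eY (k - p)) * Real.exp (-(δ * absZ (k - p))) *
            (Real.exp (-((α - δ) * absZ k)) * |lam j - lam 0|) := by ring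
  have hBbound : ∀ (n j : Zd d), j ≠ 0 →
      ‖(∑' l : Zd d, X (n + j) l * Y l (n + j + k)) -
        (∑' l : Zd d, X n l * Y l (n + k))‖ ≤
      (W2 * Real.exp (-((α - δ) * absZ k))) * |lam j - lam 0| := by
    intro n j hj
    have hdiff : (∑' l : Zd d, X (n + j) l * Y l (n + j + k)) -
        (∑' l : Zd d, X n l * Y l (n + k)) =
        ∑' p : Zd d, (X (n + j) (n + j + p) * Y (n + j + p) (n + j + k) -
          X n (n + p) * Y (n + p) (n + k)) := by
      rw [hZdiag (n + j), hZdiag n, ← Summable.tsum_sub (hsumCp (n + j)) (hsumCp n)]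
    rw [hdiff]
    have hsn2 : Summable (fun p : Zd d => ‖        (X (n + j) (n + j + p) * Y (n + j + p) (n + j + k) -
          X n (n + p) * Y (n + p) (n + k))‖) :=
      Summable.of_nonneg_of_le (fun p => norm_nonneg _)
        (fun p => hterm2 n p j hj) (hg2s.mul_right _)
    calc ‖∑' p : Zd d, (X (n + j) (n + j + p) * Y (n + j + p) (n + j + k) -
            X n (n + p) * Y (n + p) (n + k))‖
        ≤ ∑' p : Zd d, ‖X (n + j) (n + j + p) * Y (n + j + p) (n + j + k) -
            X n (n + p) * Y (n + p) (n + k)‖ := by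
          have h := norm_tsum_le_tsum_norm
            (f := fun p : Zd d => X (n + j) (n + j + p) * Y (n + j + p) (n + j + k) -
              X n (n + p) * Y (n + p) (n + k))
            (by simpa using hsn2)
          simpa using h
      _ ≤ ∑' p : Zd d, (bX p * cY (k - p) + aX p * eY (k - p)) *
            Real.exp (-(δ * absZ (k - p))) *
            (Real.exp (-((α - δ) * absZ k)) * |lam j - lam 0|) :=
          Summable.tsum_le_tsum (fun p => hterm2 n p j hj) hsn2 (hg2s.mul_right _)
      _ = W2 * (Real.exp (-((α - δ) * absZ k)) * |lam j - lam 0|) := tsum_mul_right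
      _ = (W2 * Real.exp (-((α - δ) * absZ k))) * |lam j - lam 0| := by ring
  -- assemble
  have hTn : Tnorm lam (fun n => (fun n m => ∑' l : Zd d, X n l * Y l m) n (n + k)) ≤
      ENNReal.ofReal (W1 * Real.exp (-((α - δ) * absZ k))) +
        ENNReal.ofReal (W2 * Real.exp (-((α - δ) * absZ k))) := by
    apply Tnorm_le_of_bounds lam hl0 _ _ _ hAbound
    intro n j hj
    exact hBbound n j hj
  have hcancel : Real.exp ((α - δ) * absZ k) * Real.exp (-((α - δ) * absZ k)) = 1 := by
    rw [← Real.exp_add]; simp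
  calc ENNReal.ofReal (Real.exp ((α - δ) * absZ k)) *
        Tnorm lam (fun n => (fun n m => ∑' l : Zd d, X n l * Y l m) n (n + k))
      ≤ ENNReal.ofReal (Real.exp ((α - δ) * absZ k)) *
          (ENNReal.ofReal (W1 * Real.exp (-((α - δ) * absZ k))) +
            ENNReal.ofReal (W2 * Real.exp (-((α - δ) * absZ k)))) :=
        mul_le_mul_right hTn _
    _ = ENNReal.ofReal W1 + ENNReal.ofReal W2 := by
        rw [mul_add, ← ENNReal.ofReal_mul (Real.exp_pos _).le,
          ← ENNReal.ofReal_mul (Real.exp_pos _).le]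
        congr 1
        · congr 1
          linear_combination W1 * hcancel
        · congr 1
          linear_combination W2 * hcancel
    _ = ENNReal.ofReal (W1 + W2) := (ENNReal.ofReal_add hW1nn hW2nn).symm
    _ ≤ ENNReal.ofReal (s * t * Q) := ENNReal.ofReal_le_ofReal hW12
    _ = ENNReal.ofReal Q * matNorm lam (α - δ) X * matNorm lam α Y := by
        rw [show s * t * Q = Q * s * t from by ring, ENNReal.ofReal_mul (by positivity),
          ENNReal.ofReal_mul hQ0, hs, ht, ENNReal.ofReal_toReal hX, ENNReal.ofReal_toReal hY]
end
end
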